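/- Let ε ∈ (0,1), let u0 ∈ ℝ with |u0| > 1, and let 0 < h ≤ 4ε²/(u0² + 2|u0| - 1). Let (u_n) be any real sequence with u_0 = u0 satisfying the convex-splitting modified Crank-Nicolson recurrence (u_n - u_{n-1})/h + (1/ε²)·((u_n + u_{n-1})/2)·((u_n² + u_{n-1}²)/2) - (1/ε²)·u_{n-1} = 0 for all n ≥ 1. Then: if u0 > 1, u_n ≥ 1 for all n and (u_n) is nonincreasing; if u0 < -1, u_n ≤ -1 for all n and (u_n) is nondecreasing; and in both cases u_n converges to sign(u0) as n → ∞. -/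

import Mathlib

lemma cs_step (ε h a b M : ℝ) (hε : 0 < ε) (hh : 0 < h)
    (hb1 : 1 ≤ b) (hbM : b ≤ M)
    (hhM : h ≤ 4 * ε ^ 2 / (M ^ 2 + 2 * M - 1))
    (heq : (a - b) / h + (1 / ε ^ 2) * ((a + b) / 2) * ((a ^ 2 + b ^ 2) / 2)
      - (1 / ε ^ 2) * b = 0) :
    1 ≤ a ∧ a ≤ b := by
  have hM1 : 1 ≤ M := hb1.trans hbM
  have hMpos : 0 < M ^ 2 + 2 * M - 1 := by nlinarith
  have hhM' : h * (M ^ 2 + 2 * M - 1) ≤ 4 * ε ^ 2 := (le_div_iff₀ hMpos).mp hhM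
  have hε2 : (0:ℝ) < ε ^ 2 := by positivity
  have hne : h ≠ 0 := ne_of_gt hh
  have hεne : ε ^ 2 ≠ 0 := ne_of_gt hε2
  have E : 4 * ε ^ 2 * (a - b) + h * ((a + b) * (a ^ 2 + b ^ 2)) - 4 * h * b = 0 := by
    field_simp at heq
    have heq2 : (4 * ε ^ 2 * (a - b) + h * ((a + b) * (a ^ 2 + b ^ 2)) - 4 * h * b) * ε ^ 2 = 0 := by
      linear_combination ε ^ 2 * heq
    exact (mul_eq_zero.mp heq2).resolve_right hεne
  have hG1 : (b - 1) * (h * (b ^ 2 + 2 * b - 1) - 4 * ε ^ 2) ≤ 0 := by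
    have hbb : b ^ 2 + 2 * b - 1 ≤ M ^ 2 + 2 * M - 1 := by nlinarith
    have h1 : h * (b ^ 2 + 2 * b - 1) ≤ h * (M ^ 2 + 2 * M - 1) :=
      mul_le_mul_of_nonneg_left hbb hh.le
    nlinarith
  constructor
  · by_contra hc
    push_neg at hc
    have ht : 0 < 1 - a := by linarith
    have hQpos : 0 < 4 * ε ^ 2 + h * (a ^ 2 + a * b + b ^ 2 + a + b + 1) := by
      have : (0:ℝ) ≤ h * (a ^ 2 + a * b + b ^ 2 + a + b + 1) := by
        have h2 : (0:ℝ) ≤ (a + b) ^ 2 + (a + 1) ^ 2 + (b + 1) ^ 2 := by positivity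
        nlinarith
      linarith
    nlinarith [mul_pos ht hQpos, E, hG1]
  · by_contra hc
    push_neg at hc
    have ht : 0 < a - b := by linarith
    have hfac : 0 < 4 * ε ^ 2 + h * (a ^ 2 + 2 * a * b + 3 * b ^ 2) := by
      have : (0:ℝ) ≤ h * (a ^ 2 + 2 * a * b + 3 * b ^ 2) := by
        have h2 : (0:ℝ) ≤ (a + b) ^ 2 + 2 * b ^ 2 := by positivity
        nlinarith
      linarith
    have hGb : (0:ℝ) ≤ 4 * h * b * (b ^ 2 - 1) := by
      have : (0:ℝ) ≤ b ^ 2 - 1 := by nlinarith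
      have hb0 : (0:ℝ) ≤ b := by linarith
      positivity
    nlinarith [mul_pos ht hfac, E, hGb]

lemma cs_pos (ε : ℝ) (hε0 : 0 < ε)
    (u0 : ℝ) (hu0 : 1 < u0)
    (h : ℝ) (hh0 : 0 < h) (hh1 : h ≤ 4 * ε ^ 2 / (u0 ^ 2 + 2 * u0 - 1))
    (u : ℕ → ℝ) (hinit : u 0 = u0)
    (hrec : ∀ n : ℕ, (u (n + 1) - u n) / h
      + (1 / ε ^ 2) * ((u (n + 1) + u n) / 2) * (((u (n + 1)) ^ 2 + (u n) ^ 2) / 2)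
      - (1 / ε ^ 2) * u n = 0) :
    (∀ n : ℕ, 1 ≤ u n) ∧ Antitone u ∧
      Filter.Tendsto u Filter.atTop (nhds 1) := by
  have key : ∀ n : ℕ, 1 ≤ u n ∧ u n ≤ u0 := by
    intro n
    induction n with
    | zero => exact ⟨hinit ▸ hu0.le, hinit.le⟩
    | succ k ih =>
      obtain ⟨h1, h2⟩ := cs_step ε h (u (k+1)) (u k) u0 hε0 hh0 ih.1 ih.2 hh1 (hrec k)
      exact ⟨h1, h2.trans ih.2⟩
  have hstep : ∀ n : ℕ, u (n + 1) ≤ u n := fun n =>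
    (cs_step ε h (u (n+1)) (u n) u0 hε0 hh0 (key n).1 (key n).2 hh1 (hrec n)).2
  have hanti : Antitone u := antitone_nat_of_succ_le hstep
  have hbdd : BddBelow (Set.range u) := ⟨1, by rintro x ⟨n, rfl⟩; exact (key n).1⟩
  set L : ℝ := ⨅ n, u n with hL
  have h1 : Filter.Tendsto u Filter.atTop (nhds L) := tendsto_atTop_ciInf hanti hbdd
  have h2 : Filter.Tendsto (fun n => u (n + 1)) Filter.atTop (nhds L) :=
    h1.comp (Filter.tendsto_add_atTop_nat 1)
  have hL1 : 1 ≤ L := le_ciInf fun n => (key n).1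
  have t1 : Filter.Tendsto (fun n => (u (n+1) - u n) / h) Filter.atTop (nhds ((L - L) / h)) :=
    (h2.sub h1).div_const h
  have t2 : Filter.Tendsto (fun n => (1 / ε ^ 2) * ((u (n+1) + u n) / 2)) Filter.atTop
      (nhds ((1 / ε ^ 2) * ((L + L) / 2))) := ((h2.add h1).div_const 2).const_mul _
  have t3 : Filter.Tendsto (fun n => ((u (n+1)) ^ 2 + (u n) ^ 2) / 2) Filter.atTop
      (nhds ((L ^ 2 + L ^ 2) / 2)) := ((h2.pow 2).add (h1.pow 2)).div_const 2
  have t4 : Filter.Tendsto (fun n => (u (n+1) - u n) / h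
      + (1 / ε ^ 2) * ((u (n+1) + u n) / 2) * (((u (n+1)) ^ 2 + (u n) ^ 2) / 2)
      - (1 / ε ^ 2) * u n) Filter.atTop
      (nhds ((L - L) / h + (1 / ε ^ 2) * ((L + L) / 2) * ((L ^ 2 + L ^ 2) / 2)
        - (1 / ε ^ 2) * L)) :=
    (t1.add (t2.mul t3)).sub (h1.const_mul _)
  have t5 : Filter.Tendsto (fun _ : ℕ => (0:ℝ)) Filter.atTop
      (nhds ((L - L) / h + (1 / ε ^ 2) * ((L + L) / 2) * ((L ^ 2 + L ^ 2) / 2)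
        - (1 / ε ^ 2) * L)) := by
    have : (fun n : ℕ => (0:ℝ)) = fun n => (u (n+1) - u n) / h
        + (1 / ε ^ 2) * ((u (n+1) + u n) / 2) * (((u (n+1)) ^ 2 + (u n) ^ 2) / 2)
        - (1 / ε ^ 2) * u n := funext fun n => (hrec n).symm
    rw [this]; exact t4
  have hzero : (L - L) / h + (1 / ε ^ 2) * ((L + L) / 2) * ((L ^ 2 + L ^ 2) / 2)
      - (1 / ε ^ 2) * L = 0 := tendsto_nhds_unique t5 tendsto_const_nhds
  have hεne : ε ^ 2 ≠ 0 := by positivity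
  have hcube : L ^ 3 - L = 0 := by
    have := hzero
    field_simp at this
    nlinarith [this]
  have hL' : L = 1 := by nlinarith [hcube]
  exact ⟨fun n => (key n).1, hanti, hL' ▸ h1⟩

/-- CS-modCN with `|u0| > 1` and `0 < h ≤ 4ε²/(u0² + 2|u0| - 1)`: the numerical solution
stays beyond `±1`, is monotone, and converges to `sign u0`. -/
theorem cs_mod_crank_nicolson_monotone_big_initial
    (ε : ℝ) (hε0 : 0 < ε) (hε1 : ε < 1)
    (u0 : ℝ) (hu0 : 1 < |u0|)
    (h : ℝ) (hh0 : 0 < h) (hh1 : h ≤ 4 * ε ^ 2 / (u0 ^ 2 + 2 * |u0| - 1))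
    (u : ℕ → ℝ) (hinit : u 0 = u0)
    (hrec : ∀ n : ℕ, (u (n + 1) - u n) / h
      + (1 / ε ^ 2) * ((u (n + 1) + u n) / 2) * (((u (n + 1)) ^ 2 + (u n) ^ 2) / 2)
      - (1 / ε ^ 2) * u n = 0) :
    (1 < u0 → (∀ n : ℕ, 1 ≤ u n) ∧ Antitone u) ∧
    (u0 < -1 → (∀ n : ℕ, u n ≤ -1) ∧ Monotone u) ∧
    Filter.Tendsto u Filter.atTop (nhds (if 0 < u0 then (1 : ℝ) else -1)) := by
  rcases lt_or_ge 1 u0 with hpos | hle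
  · have habs : |u0| = u0 := abs_of_pos (by linarith)
    rw [habs] at hh1
    obtain ⟨hge, hanti, htend⟩ := cs_pos ε hε0 u0 hpos h hh0 hh1 u hinit hrec
    refine ⟨fun _ => ⟨hge, hanti⟩, fun hneg => absurd hneg (by linarith), ?_⟩
    rw [if_pos (by linarith : (0:ℝ) < u0)]
    exact htend
  · have hneg : u0 < -1 := by
      rcases abs_cases u0 with ⟨he, _⟩ | ⟨he, _⟩
      · linarith [hu0, he ▸ hu0]
      · linarith [he ▸ hu0]
    have habs : |u0| = -u0 := abs_of_neg (by linarith)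
    rw [habs] at hh1
    have hh1' : h ≤ 4 * ε ^ 2 / ((-u0) ^ 2 + 2 * (-u0) - 1) := by
      have : (-u0) ^ 2 + 2 * (-u0) - 1 = u0 ^ 2 + 2 * (-u0) - 1 := by ring
      rw [this]; exact hh1
    have hrec' : ∀ n : ℕ, ((-u (n + 1)) - (-u n)) / h
        + (1 / ε ^ 2) * (((-u (n + 1)) + (-u n)) / 2) * (((-u (n + 1)) ^ 2 + (-u n) ^ 2) / 2)
        - (1 / ε ^ 2) * (-u n) = 0 := by
      intro n
      have hid : ((-u (n + 1)) - (-u n)) / h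
        + (1 / ε ^ 2) * (((-u (n + 1)) + (-u n)) / 2) * (((-u (n + 1)) ^ 2 + (-u n) ^ 2) / 2)
        - (1 / ε ^ 2) * (-u n)
        = -((u (n + 1) - u n) / h
        + (1 / ε ^ 2) * ((u (n + 1) + u n) / 2) * (((u (n + 1)) ^ 2 + (u n) ^ 2) / 2)
        - (1 / ε ^ 2) * u n) := by ring
      rw [hid, hrec n, neg_zero]
    obtain ⟨hge, hanti, htend⟩ := cs_pos ε hε0 (-u0) (by linarith) h hh0 hh1'
      (fun n => -u n) (by simp [hinit]) hrec'
    refine ⟨fun hp => absurd hp (by linarith), fun _ => ⟨fun n => by linarith [hge n], ?_⟩, ?_⟩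
    · intro m n hmn
      have := hanti hmn
      simpa using this
    · rw [if_neg (by linarith : ¬ (0:ℝ) < u0)]
      have := htend.neg
      simpa using this
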